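/- Let θ ∈ S[G] with |G| = n, and let θ^{G^r} ∈ S[G^r] denote the extension of θ by zero along the diagonal subgroup G ≅ Δ < G^r (i.e., θ^{G^r}(g,…,g) = θ(g) and θ^{G^r} vanishes off the diagonal). Then det(θ^{G^r}) = det(θ)^{n^{r-1}}. -/

import Mathlib

open Finset

variable {G : Type*} [Group G] [Fintype G] [DecidableEq G]
variable {S : Type*} [CommRing S]

/-- The circulant matrix of a filter. -/
def Mat {G : Type*} [Group G] [Fintype G] (θ : G → S) : Matrix G G S :=
  Matrix.of fun i j => θ (i * j⁻¹)

/-- The extension of a filter `θ` on `G` by zero along the diagonal subgroup of `G^r`. -/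
noncomputable def diagExt (r : ℕ) (θ : G → S) : (Fin r → G) → S :=
  fun v => if h : ∃ g : G, v = fun _ => g then θ h.choose else 0

lemma diagExt_eq (k : ℕ) (θ : G → S) (x : Fin (k + 1) → G) :
    diagExt (k + 1) θ x = if ∀ i, x i = x 0 then θ (x 0) else 0 := by
  unfold diagExt
  by_cases h1 : ∃ g : G, x = fun _ => g
  · rw [dif_pos h1]
    have hx0 : x 0 = h1.choose := congrFun h1.choose_spec 0
    have hall : ∀ i, x i = x 0 := by
      intro i
      rw [h1.choose_spec]
    rw [if_pos hall, hx0]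
  · rw [dif_neg h1]
    have : ¬ ∀ i, x i = x 0 := by
      intro hall
      exact h1 ⟨x 0, funext fun i => hall i⟩
    rw [if_neg this]

/-- `det(θ^{G^r}) = det(θ)^{n^{r-1}}` where `n = |G|`. -/
theorem det_diagExt (r : ℕ) (hr : 1 ≤ r) (θ : G → S) :
    (Mat (diagExt r θ)).det = (Mat θ).det ^ (Fintype.card G ^ (r - 1)) := by
  obtain ⟨k, rfl⟩ : ∃ k, r = k + 1 := ⟨r - 1, (Nat.succ_pred_eq_of_pos hr).symm⟩
  -- reindexing equivalence
  let e : (Fin (k + 1) → G) ≃ G × (Fin k → G) :=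
    { toFun := fun v => (v 0, fun i => (v 0)⁻¹ * v i.succ)
      invFun := fun p => Fin.cons p.1 (fun i => p.1 * p.2 i)
      left_inv := by
        intro v
        funext i
        cases i using Fin.cases with
        | zero => simp
        | succ j => simp
      right_inv := by
        intro p
        ext i <;> simp }
  have hM : Mat (diagExt (k + 1) θ)
      = (Matrix.blockDiagonal (fun _ : (Fin k → G) => Mat θ)).submatrix e e := by
    ext v w
    have key : (∀ i, (v * w⁻¹) i = (v * w⁻¹) 0) ↔
        (fun i : Fin k => (v 0)⁻¹ * v i.succ) = (fun i : Fin k => (w 0)⁻¹ * w i.succ) := by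
      constructor
      · intro h
        funext j
        have hj := h j.succ
        simp only [Pi.mul_apply, Pi.inv_apply] at hj
        have : v j.succ = v 0 * (w 0)⁻¹ * w j.succ := by
          rw [← hj]; group
        rw [this]; group
      · intro h i
        cases i using Fin.cases with
        | zero => rfl
        | succ j =>
          have hj := congrFun h j
          have : v j.succ = v 0 * (w 0)⁻¹ * w j.succ := by
            have : v 0 * ((v 0)⁻¹ * v j.succ) = v 0 * ((w 0)⁻¹ * w j.succ) := by rw [hj]
            rw [← mul_assoc, mul_inv_cancel, one_mul] at this
            rw [this]; group
          simp only [Pi.mul_apply, Pi.inv_apply, this]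
          group
    simp only [Mat, Matrix.of_apply, Matrix.submatrix_apply, Matrix.blockDiagonal_apply, e,
      Equiv.coe_fn_mk]
    rw [diagExt_eq k θ (v * w⁻¹)]
    exact if_congr key rfl rfl
  rw [hM, Matrix.det_submatrix_equiv_self, Matrix.det_blockDiagonal]
  simp [Finset.prod_const, Fintype.card_fun]
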